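/- arXiv:1701.01340 — 3 statements merged into one kernel-verified Lean document; each statement's English description precedes it below -/
import Mathlib

section
/- For every (λ_1,…,λ_p) ∈ (0,∞)^p, E(max_{1≤j≤p} M(I_j)^{λ_j}) = ℓ(b_1,…,b_d) / (1 + ℓ(b_1,…,b_d)), where b_i = σ_i^η λ_{j(i)}^η for each i ∈ I. -/
open MeasureTheory ProbabilityTheory Real Filter Topology
open scoped ProbabilityTheory

noncomputable section

/-- Marginal Fréchet-type distribution function `F_i(t) = exp(-σ t^(-1/η))` for `t > 0`. -/
def margF (σ η t : ℝ) : ℝ := if 0 < t then Real.exp (-σ * t ^ (-1 / η)) else 0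

/-- Joint distribution function of the random vector `X`. -/
def jointF {Ω : Type*} [MeasureSpace Ω] {d : ℕ} (X : Fin d → Ω → ℝ) (t : Fin d → ℝ) : ℝ :=
  (ℙ {ω | ∀ i, X i ω ≤ t i}).toReal

/-- Exponent function `ℓ(t) = -ln F_X(t)`. -/
def expo {Ω : Type*} [MeasureSpace Ω] {d : ℕ} (X : Fin d → Ω → ℝ) (t : Fin d → ℝ) : ℝ :=
  -Real.log (jointF X t)

/-- Block maximum `M(I_j) = max_{i ∈ I_j} F_i(X_i)`, where `I_j = {i | B i = j}`. -/
def blockMax {Ω : Type*} [MeasureSpace Ω] {d p : ℕ} (B : Fin d → Fin p) (σ : Fin d → ℝ)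
    (η : ℝ) (X : Fin d → Ω → ℝ) (j : Fin p) (ω : Ω) : ℝ :=
  sSup ((fun i => margF (σ i) η (X i ω)) '' {i | B i = j})

/-- Extremal dependence function
`ε(λ₁,…,λ_p) = E(max_j M(I_j)^(λ_j)) / (1 - E(max_j M(I_j)^(λ_j)))`. -/
def epsFun {Ω : Type*} [MeasureSpace Ω] {d p : ℕ} (B : Fin d → Fin p) (σ : Fin d → ℝ)
    (η : ℝ) (X : Fin d → Ω → ℝ) (l : Fin p → ℝ) : ℝ :=
  (∫ ω, ⨆ j, blockMax B σ η X j ω ^ l j ∂ℙ) /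
    (1 - ∫ ω, ⨆ j, blockMax B σ η X j ω ^ l j ∂ℙ)

/-- Single-block extremal dependence function `ε_{I_j}(λ)`. -/
def epsBlock {Ω : Type*} [MeasureSpace Ω] {d p : ℕ} (B : Fin d → Fin p) (σ : Fin d → ℝ)
    (η : ℝ) (X : Fin d → Ω → ℝ) (j : Fin p) (l : ℝ) : ℝ :=
  (∫ ω, blockMax B σ η X j ω ^ l ∂ℙ) / (1 - ∫ ω, blockMax B σ η X j ω ^ l ∂ℙ)

theorem statement3
    {Ω : Type*} [MeasureSpace Ω] [IsProbabilityMeasure (ℙ : Measure Ω)]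
    {d p : ℕ} (hd : 0 < d) (hp : 0 < p)
    (X : Fin d → Ω → ℝ) (hX : ∀ i, Measurable (X i))
    (σ : Fin d → ℝ) (hσ : ∀ i, 0 < σ i)
    (η : ℝ) (hη0 : 0 < η) (hη1 : η ≤ 1)
    (hmarg : ∀ i, ∀ t : ℝ, 0 < t →
      ℙ {ω | X i ω ≤ t} = ENNReal.ofReal (Real.exp (-σ i * t ^ (-1 / η))))
    (hpos : ∀ t : Fin d → ℝ, (∀ i, 0 < t i) → 0 < jointF X t)
    (hhom : ∀ c : ℝ, 0 < c → ∀ t : Fin d → ℝ, (∀ i, 0 < t i) →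
      expo X (fun i => c * t i) = c ^ (-1 / η) * expo X t)
    (B : Fin d → Fin p) (hB : Function.Surjective B)
    (l : Fin p → ℝ) (hl : ∀ j, 0 < l j) :
    (∫ ω, ⨆ j, blockMax B σ η X j ω ^ l j ∂ℙ) =
      expo X (fun i => σ i ^ η * l (B i) ^ η) /
        (1 + expo X (fun i => σ i ^ η * l (B i) ^ η)) := by
  classical
  haveI : Nonempty (Fin p) := Fin.pos_iff_nonempty.mp hp
  set b : Fin d → ℝ := fun i => σ i ^ η * l (B i) ^ η with hbdef
  set L : ℝ := expo X b with hLdef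
  set Y : Ω → ℝ := fun ω => ⨆ j, blockMax B σ η X j ω ^ l j with hYdef
  have hbpos : ∀ i, 0 < b i := fun i =>
    mul_pos (Real.rpow_pos_of_pos (hσ i) η) (Real.rpow_pos_of_pos (hl (B i)) η)
  -- L ≥ 0
  have hjb : 0 < jointF X b := hpos b hbpos
  have hjb1 : jointF X b ≤ 1 := by
    rw [jointF]
    calc (ℙ {ω | ∀ i, X i ω ≤ b i}).toReal ≤ (1 : ENNReal).toReal :=
          ENNReal.toReal_mono ENNReal.one_ne_top prob_le_one
      _ = 1 := by simp
  have hL0 : 0 ≤ L := by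
    rw [hLdef, expo]
    have := Real.log_nonpos hjb.le hjb1
    linarith
  -- basic bounds on margF and blockMax
  have hm0 : ∀ i x, 0 ≤ margF (σ i) η x := by
    intro i x; rw [margF]; split
    · exact (Real.exp_pos _).le
    · exact le_rfl
  have hm1 : ∀ i x, margF (σ i) η x ≤ 1 := by
    intro i x; rw [margF]; split
    · rename_i hx
      refine (Real.exp_lt_one_iff.mpr ?_).le
      have : 0 < x ^ (-1 / η) := Real.rpow_pos_of_pos hx _
      nlinarith [hσ i]
    · exact zero_le_one
  have hSne : ∀ (j : Fin p) (ω : Ω),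
      ((fun i => margF (σ i) η (X i ω)) '' {i | B i = j}).Nonempty := by
    intro j ω
    obtain ⟨i, hi⟩ := hB j
    exact Set.Nonempty.image _ ⟨i, hi⟩
  have hSbdd : ∀ (j : Fin p) (ω : Ω),
      BddAbove ((fun i => margF (σ i) η (X i ω)) '' {i | B i = j}) :=
    fun j ω => (Set.toFinite _).bddAbove
  have hbm0 : ∀ (j : Fin p) (ω : Ω), 0 ≤ blockMax B σ η X j ω := by
    intro j ω
    exact Real.sSup_nonneg (by rintro x ⟨i, -, rfl⟩; exact hm0 i _)
  have hbm1 : ∀ (j : Fin p) (ω : Ω), blockMax B σ η X j ω ≤ 1 := by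
    intro j ω
    exact csSup_le (hSne j ω) (by rintro x ⟨i, -, rfl⟩; exact hm1 i _)
  have hY0 : ∀ ω, 0 ≤ Y ω := fun ω =>
    Real.iSup_nonneg fun j => Real.rpow_nonneg (hbm0 j ω) _
  have hY1 : ∀ ω, Y ω ≤ 1 := fun ω =>
    ciSup_le fun j => Real.rpow_le_one (hbm0 j ω) (hbm1 j ω) (hl j).le
  -- reduction of the event {Y ≤ u}
  have hred : ∀ u : ℝ, 0 ≤ u → ∀ ω,
      (Y ω ≤ u ↔ ∀ i, margF (σ i) η (X i ω) ≤ u ^ (l (B i))⁻¹) := by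
    intro u hu ω
    rw [hYdef]
    rw [ciSup_le_iff ((Set.finite_range _).bddAbove)]
    have h1 : ∀ j : Fin p,
        (blockMax B σ η X j ω ^ l j ≤ u ↔ blockMax B σ η X j ω ≤ u ^ (l j)⁻¹) :=
      fun j => (Real.le_rpow_inv_iff_of_pos (hbm0 j ω) hu (hl j)).symm
    constructor
    · intro h i
      have := (h1 (B i)).mp (h (B i))
      rw [blockMax, csSup_le_iff (hSbdd (B i) ω) (hSne (B i) ω)] at this
      exact this _ ⟨i, rfl, rfl⟩
    · intro h j
      rw [h1 j, blockMax, csSup_le_iff (hSbdd j ω) (hSne j ω)]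
      rintro x ⟨i, hi, rfl⟩
      rw [Set.mem_setOf_eq] at hi
      subst hi
      exact h i
  -- the event equality for 0 < u < 1
  have hz : -1 / η < 0 := div_neg_of_neg_of_pos (by norm_num) hη0
  have hev : ∀ u : ℝ, 0 < u → u < 1 →
      {ω | Y ω ≤ u} = {ω | ∀ i, X i ω ≤ ((-Real.log u) ^ (-η)) * b i} := by
    intro u hu0 hu1
    have hlogu : 0 < -Real.log u := neg_pos.mpr (Real.log_neg hu0 hu1)
    set c : ℝ := (-Real.log u) ^ (-η) with hcdef
    have hc : 0 < c := Real.rpow_pos_of_pos hlogu _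
    have hcpow : c ^ (-1 / η) = -Real.log u := by
      rw [hcdef, ← Real.rpow_mul hlogu.le]
      have : -η * (-1 / η) = 1 := by field_simp
      rw [this, Real.rpow_one]
    have hT : ∀ i, 0 < c * b i := fun i => mul_pos hc (hbpos i)
    have hTval : ∀ i, margF (σ i) η (c * b i) = u ^ (l (B i))⁻¹ := by
      intro i
      rw [margF, if_pos (hT i)]
      have hexp : (c * b i) ^ (-1 / η) = (-Real.log u) * ((σ i)⁻¹ * (l (B i))⁻¹) := by
        rw [Real.mul_rpow hc.le (hbpos i).le, hcpow, hbdef]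
        have h1 : (σ i ^ η * l (B i) ^ η) ^ (-1 / η)
            = (σ i ^ η) ^ (-1 / η) * (l (B i) ^ η) ^ (-1 / η) :=
          Real.mul_rpow (Real.rpow_nonneg (hσ i).le _) (Real.rpow_nonneg (hl (B i)).le _)
        rw [h1, ← Real.rpow_mul (hσ i).le, ← Real.rpow_mul (hl (B i)).le]
        have h2 : η * (-1 / η) = -1 := by field_simp
        rw [h2, Real.rpow_neg_one, Real.rpow_neg_one]
      rw [hexp]
      have h3 : -σ i * (-Real.log u * ((σ i)⁻¹ * (l (B i))⁻¹))
          = Real.log u * (l (B i))⁻¹ := by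
        field_simp
        rw [mul_div_mul_left _ _ (hσ i).ne']
      rw [h3, ← Real.rpow_def_of_pos hu0]
    ext ω
    rw [Set.mem_setOf_eq, Set.mem_setOf_eq, hred u hu0.le ω]
    refine forall_congr' fun i => ?_
    rw [← hTval i]
    by_cases hx : 0 < X i ω
    · rw [margF, margF, if_pos hx, if_pos (hT i), Real.exp_le_exp]
      constructor
      · intro h
        have h4 : (c * b i) ^ (-1 / η) ≤ (X i ω) ^ (-1 / η) := by
          nlinarith [hσ i]
        exact (Real.rpow_le_rpow_iff_of_neg (hT i) hx hz).mp h4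
      · intro h
        have h4 : (c * b i) ^ (-1 / η) ≤ (X i ω) ^ (-1 / η) :=
          (Real.rpow_le_rpow_iff_of_neg (hT i) hx hz).mpr h
        nlinarith [hσ i]
    · push_neg at hx
      constructor
      · intro _; exact hx.trans (hT i).le
      · intro _
        rw [margF, if_neg (not_lt.mpr hx), margF, if_pos (hT i)]
        exact (Real.exp_pos _).le
  -- measure of the sublevel event for 0 < u < 1
  have hkey : ∀ u : ℝ, 0 < u → u < 1 →
      ℙ {ω | Y ω ≤ u} = ENNReal.ofReal (u ^ L) := by
    intro u hu0 hu1
    have hlogu : 0 < -Real.log u := neg_pos.mpr (Real.log_neg hu0 hu1)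
    set c : ℝ := (-Real.log u) ^ (-η) with hcdef
    have hc : 0 < c := Real.rpow_pos_of_pos hlogu _
    have hcpow : c ^ (-1 / η) = -Real.log u := by
      rw [hcdef, ← Real.rpow_mul hlogu.le]
      have : -η * (-1 / η) = 1 := by field_simp
      rw [this, Real.rpow_one]
    have hT : ∀ i, 0 < c * b i := fun i => mul_pos hc (hbpos i)
    have hjf : jointF X (fun i => c * b i) = u ^ L := by
      have h0 : 0 < jointF X (fun i => c * b i) := hpos _ hT
      have hlogjf : Real.log (jointF X (fun i => c * b i)) = Real.log u * L := by
        have he : expo X (fun i => c * b i) = (-Real.log u) * L := by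
          rw [hhom c hc b hbpos, hcpow, hLdef]
        rw [expo] at he
        linarith [he]
      rw [← Real.exp_log h0, hlogjf, ← Real.rpow_def_of_pos hu0]
    rw [hev u hu0 hu1, ← hjf, jointF, ENNReal.ofReal_toReal (measure_ne_top _ _)]
  -- measurability of joint-CDF events
  have hevm : ∀ t : Fin d → ℝ, MeasurableSet {ω | ∀ i, X i ω ≤ t i} := by
    intro t
    have : {ω | ∀ i, X i ω ≤ t i} = ⋂ i, (X i) ⁻¹' (Set.Iic (t i)) := by
      ext ω; simp [Set.mem_iInter]
    rw [this]
    exact MeasurableSet.iInter fun i => (hX i) measurableSet_Iic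
  -- measurability of Y
  have hYmeas : Measurable Y := by
    apply measurable_of_Iic
    intro u
    rcases lt_or_ge u 0 with hu | hu
    · have : Y ⁻¹' (Set.Iic u) = ∅ := by
        ext ω
        simp only [Set.mem_preimage, Set.mem_Iic, Set.mem_empty_iff_false, iff_false, not_le]
        exact hu.trans_le (hY0 ω)
      rw [this]; exact MeasurableSet.empty
    rcases lt_or_ge u 1 with hu1 | hu1
    · rcases eq_or_lt_of_le hu with hu0 | hu0
      · -- u = 0
        have : Y ⁻¹' (Set.Iic u) = {ω | ∀ i, X i ω ≤ 0} := by
          ext ω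
          rw [Set.mem_preimage, Set.mem_Iic, Set.mem_setOf_eq, hred u hu ω]
          refine forall_congr' fun i => ?_
          rw [← hu0, Real.zero_rpow (inv_ne_zero (hl (B i)).ne')]
          rw [margF]
          split
          · rename_i hx
            simp only [(Real.exp_pos _).not_ge, false_iff, not_le]
            exact hx
          · rename_i hx
            simp only [le_refl, true_iff]
            exact not_lt.mp hx
        rw [this]
        exact hevm (fun _ => 0)
      · -- 0 < u < 1
        have : Y ⁻¹' (Set.Iic u)
            = {ω | ∀ i, X i ω ≤ ((-Real.log u) ^ (-η)) * b i} := hev u hu0 hu1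
        rw [this]
        exact hevm _
    · have : Y ⁻¹' (Set.Iic u) = Set.univ := by
        ext ω
        simp only [Set.mem_preimage, Set.mem_Iic, Set.mem_univ, iff_true]
        exact (hY1 ω).trans hu1
      rw [this]; exact MeasurableSet.univ
  -- integrability of Y
  have hint : Integrable Y ℙ := by
    refine (integrable_const (1 : ℝ)).mono' hYmeas.aestronglyMeasurable ?_
    exact ae_of_all _ fun ω => by
      rw [Real.norm_eq_abs, abs_of_nonneg (hY0 ω)]; exact hY1 ω
  -- layer cake
  have hlc := hint.integral_eq_integral_meas_lt (ae_of_all _ hY0)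
  rw [hlc]
  -- compute the tail probabilities
  have htail : Set.EqOn (fun t => (ℙ {a | t < Y a}).toReal)
      (Set.indicator (Set.Ioo (0:ℝ) 1) (fun t => 1 - t ^ L)) (Set.Ioi (0:ℝ)) := by
    intro t ht
    rw [Set.mem_Ioi] at ht
    dsimp only
    rcases lt_or_ge t 1 with h1 | h1
    · rw [Set.indicator_of_mem (Set.mem_Ioo.mpr ⟨ht, h1⟩)]
      have hcompl : {a | t < Y a} = {a | Y a ≤ t}ᶜ := by
        ext a; simp [not_le]
      have hms : MeasurableSet {a | Y a ≤ t} := hYmeas measurableSet_Iic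
      have htL1 : t ^ L ≤ 1 := Real.rpow_le_one ht.le h1.le hL0
      rw [hcompl, prob_compl_eq_one_sub hms, hkey t ht h1]
      rw [ENNReal.toReal_sub_of_le (by simpa using ENNReal.ofReal_le_one.mpr htL1)
        ENNReal.one_ne_top]
      rw [ENNReal.toReal_one, ENNReal.toReal_ofReal (Real.rpow_nonneg ht.le L)]
    · rw [Set.indicator_of_notMem (by simp [Set.mem_Ioo, not_lt.mpr h1])]
      have : {a | t < Y a} = ∅ := by
        ext a
        simp only [Set.mem_setOf_eq, Set.mem_empty_iff_false, iff_false, not_lt]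
        exact (hY1 a).trans h1
      rw [this]
      simp
  rw [setIntegral_congr_fun measurableSet_Ioi (f := fun t => (ℙ : Measure Ω).real {a | t < Y a}) htail]
  rw [setIntegral_indicator measurableSet_Ioo]
  rw [Set.inter_eq_self_of_subset_right Set.Ioo_subset_Ioi_self]
  rw [← integral_Ioc_eq_integral_Ioo, ← intervalIntegral.integral_of_le zero_le_one]
  have hL1 : (0:ℝ) < L + 1 := by linarith
  rw [intervalIntegral.integral_sub intervalIntegrable_const
    (intervalIntegral.intervalIntegrable_rpow (Or.inl hL0))]
  rw [intervalIntegral.integral_const, integral_rpow (Or.inl (by linarith : (-1:ℝ) < L))]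
  rw [Real.one_rpow, Real.zero_rpow hL1.ne']
  field_simp
  simp only [sub_zero, smul_eq_mul]
  ring
end
end

section
/- For every (λ_1,…,λ_p) ∈ (0,∞)^p, the extremal dependence function satisfies ε(λ_1,…,λ_p) = ℓ(b_1,…,b_d), where b_i = σ_i^η λ_{j(i)}^η for each i ∈ I. -/
open MeasureTheory ProbabilityTheory Real Filter Topology
open scoped ProbabilityTheory

noncomputable section

lemma margF_nonneg (σ η t : ℝ) : 0 ≤ margF σ η t := by
  unfold margF; split
  · exact (Real.exp_pos _).le
  · exact le_rfl

lemma margF_le_one {σ : ℝ} (hσ : 0 < σ) {η : ℝ} (hη : 0 < η) (t : ℝ) : margF σ η t ≤ 1 := by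
  unfold margF; split
  · rename_i ht
    rw [Real.exp_le_one_iff]
    have h1 : 0 < t ^ (-1/η) := Real.rpow_pos_of_pos ht _
    nlinarith
  · norm_num

lemma measurable_margF (σ η : ℝ) : Measurable (margF σ η) := by
  have heq : margF σ η = fun t =>
      if 0 < t then Real.exp (-σ * Real.exp (Real.log t * (-1 / η))) else 0 := by
    funext t
    unfold margF
    split
    · rename_i ht
      rw [Real.rpow_def_of_pos ht]
    · rfl
  rw [heq]
  refine Measurable.ite measurableSet_Ioi ?_ measurable_const
  exact (((Real.measurable_log.mul_const _).exp.const_mul (-σ)).exp)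

lemma margF_le_iff {σ η v : ℝ} (hσ : 0 < σ) (hη : 0 < η) (hv0 : 0 < v) (hv1 : v < 1) (x : ℝ) :
    margF σ η x ≤ v ↔ x ≤ (σ / (-Real.log v)) ^ η := by
  have hlog : 0 < -Real.log v := by have := Real.log_neg hv0 hv1; linarith
  have htb : 0 < σ / (-Real.log v) := div_pos hσ hlog
  have ht : 0 < (σ / (-Real.log v)) ^ η := Real.rpow_pos_of_pos htb η
  have hz : -1 / η < 0 := by
    rw [neg_div]
    have : 0 < 1 / η := by positivity
    linarith
  have htpow : ((σ / (-Real.log v)) ^ η) ^ (-1 / η) = (-Real.log v) / σ := by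
    rw [← Real.rpow_mul htb.le]
    have h2 : η * (-1 / η) = -1 := by field_simp
    rw [h2, Real.rpow_neg_one, inv_div]
  unfold margF
  split
  · rename_i hx
    have hxpow : (0 : ℝ) < x ^ (-1 / η) := Real.rpow_pos_of_pos hx _
    conv_lhs => rw [← Real.exp_log hv0, Real.exp_le_exp]
    constructor
    · intro h
      have h2 : (-Real.log v) / σ ≤ x ^ (-1 / η) := by
        rw [div_le_iff₀ hσ]
        nlinarith
      have h3 : ((σ / (-Real.log v)) ^ η) ^ (-1 / η) ≤ x ^ (-1 / η) := by
        rw [htpow]; exact h2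
      exact (Real.rpow_le_rpow_iff_of_neg ht hx hz).mp h3
    · intro h
      have h3 : ((σ / (-Real.log v)) ^ η) ^ (-1 / η) ≤ x ^ (-1 / η) :=
        (Real.rpow_le_rpow_iff_of_neg ht hx hz).mpr h
      rw [htpow, div_le_iff₀ hσ] at h3
      nlinarith
  · rename_i hx
    constructor
    · intro _; exact le_trans (not_lt.mp hx) ht.le
    · intro _; exact hv0.le

theorem statement4
    {Ω : Type*} [MeasureSpace Ω] [IsProbabilityMeasure (ℙ : Measure Ω)]
    {d p : ℕ} (hd : 0 < d) (hp : 0 < p)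
    (X : Fin d → Ω → ℝ) (hX : ∀ i, Measurable (X i))
    (σ : Fin d → ℝ) (hσ : ∀ i, 0 < σ i)
    (η : ℝ) (hη0 : 0 < η) (hη1 : η ≤ 1)
    (hmarg : ∀ i, ∀ t : ℝ, 0 < t →
      ℙ {ω | X i ω ≤ t} = ENNReal.ofReal (Real.exp (-σ i * t ^ (-1 / η))))
    (hpos : ∀ t : Fin d → ℝ, (∀ i, 0 < t i) → 0 < jointF X t)
    (hhom : ∀ c : ℝ, 0 < c → ∀ t : Fin d → ℝ, (∀ i, 0 < t i) →
      expo X (fun i => c * t i) = c ^ (-1 / η) * expo X t)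
    (B : Fin d → Fin p) (hB : Function.Surjective B)
    (l : Fin p → ℝ) (hl : ∀ j, 0 < l j) :
    epsFun B σ η X l = expo X (fun i => σ i ^ η * l (B i) ^ η) := by
  classical
  haveI : NeZero p := ⟨hp.ne'⟩
  haveI : NeZero d := ⟨hd.ne'⟩
  set b : Fin d → ℝ := fun i => σ i ^ η * l (B i) ^ η with hb
  have hbpos : ∀ i, 0 < b i := fun i =>
    mul_pos (Real.rpow_pos_of_pos (hσ i) η) (Real.rpow_pos_of_pos (hl (B i)) η)
  set θ : ℝ := expo X b with hθdef
  -- θ ≥ 0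
  have hθ0 : 0 ≤ θ := by
    have h1 : jointF X b ≤ 1 := by
      unfold jointF
      exact ENNReal.toReal_le_of_le_ofReal zero_le_one (by simpa using prob_le_one)
    have hj0 : (0:ℝ) ≤ jointF X b := ENNReal.toReal_nonneg
    have hlog : Real.log (jointF X b) ≤ 0 := Real.log_nonpos hj0 h1
    simp only [hθdef, expo]
    linarith
  -- finset blocks
  set S : Fin p → Finset (Fin d) := fun j => Finset.univ.filter (fun i => B i = j) with hS
  have hSne : ∀ j, (S j).Nonempty := by
    intro j; obtain ⟨i, hi⟩ := hB j; exact ⟨i, by simp [hS, hi]⟩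
  have hmem : ∀ i, i ∈ S (B i) := fun i => by simp [hS]
  have hBM : ∀ j ω, blockMax B σ η X j ω
      = (S j).sup' (hSne j) (fun i => margF (σ i) η (X i ω)) := by
    intro j ω
    rw [Finset.sup'_eq_csSup_image]
    unfold blockMax
    congr 1
    have : {i | B i = j} = ↑(S j) := by ext i; simp [hS]
    rw [this]
  have hBM0 : ∀ j ω, 0 ≤ blockMax B σ η X j ω := by
    intro j ω
    rw [hBM]
    obtain ⟨i, hi⟩ := hSne j
    exact le_trans (margF_nonneg _ _ _) (Finset.le_sup' (fun i => margF (σ i) η (X i ω)) hi)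
  have hBM1 : ∀ j ω, blockMax B σ η X j ω ≤ 1 := by
    intro j ω
    rw [hBM]
    exact Finset.sup'_le _ _ fun i _ => margF_le_one (hσ i) hη0 _
  -- U
  have hU0 : ∀ ω, (0:ℝ) ≤ ⨆ j, blockMax B σ η X j ω ^ l j := by
    intro ω
    have hbd : BddAbove (Set.range fun j => blockMax B σ η X j ω ^ l j) :=
      Set.Finite.bddAbove (Set.finite_range _)
    exact le_ciSup_of_le hbd ⟨0, hp⟩ (Real.rpow_nonneg (hBM0 _ _) _)
  have hU1 : ∀ ω, (⨆ j, blockMax B σ η X j ω ^ l j) ≤ 1 := fun ω =>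
    ciSup_le fun j => Real.rpow_le_one (hBM0 _ _) (hBM1 _ _) (hl j).le
  have hmeasU : Measurable (fun ω => ⨆ j, blockMax B σ η X j ω ^ l j) := by
    have hM : ∀ j, Measurable (fun ω => blockMax B σ η X j ω ^ l j) := by
      intro j
      have h1 : Measurable (fun ω => blockMax B σ η X j ω) := by
        have : (fun ω => blockMax B σ η X j ω)
            = (S j).sup' (hSne j) (fun i ω => margF (σ i) η (X i ω)) := by
          funext ω
          rw [hBM, Finset.sup'_apply]
        rw [this]
        exact Finset.measurable_sup' (hSne j)
          (fun i _ => (measurable_margF (σ i) η).comp (hX i))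
      -- rpow with positive exponent: x ^ l j, but base may be any real; base is ≥ 0 anyway
      have heq : (fun ω => blockMax B σ η X j ω ^ l j)
          = fun ω => if blockMax B σ η X j ω = 0 then 0
              else Real.exp (Real.log (blockMax B σ η X j ω) * l j) := by
        funext ω
        rcases eq_or_lt_of_le (hBM0 j ω) with h | h
        · rw [if_pos h.symm, ← h, Real.zero_rpow (hl j).ne']
        · rw [if_neg h.ne', Real.rpow_def_of_pos h]
      rw [heq]
      exact Measurable.ite (h1 (measurableSet_singleton 0)) measurable_const
        ((h1.log.mul_const _).exp)
    have : (fun ω => ⨆ j, blockMax B σ η X j ω ^ l j)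
        = Finset.univ.sup' Finset.univ_nonempty (fun j ω => blockMax B σ η X j ω ^ l j) := by
      funext ω
      rw [Finset.sup'_apply, Finset.sup'_univ_eq_ciSup]
    rw [this]
    exact Finset.measurable_sup' _ (fun j _ => hM j)
  have hint : Integrable (fun ω => ⨆ j, blockMax B σ η X j ω ^ l j) ℙ := by
    refine Integrable.mono' (integrable_const 1) hmeasU.aestronglyMeasurable
      (ae_of_all _ fun ω => ?_)
    rw [Real.norm_eq_abs, abs_of_nonneg (hU0 ω)]
    exact hU1 ω
  -- event identification
  have hms : ∀ t : Fin d → ℝ, MeasurableSet {ω | ∀ i, X i ω ≤ t i} := by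
    intro t
    have : {ω | ∀ i, X i ω ≤ t i} = ⋂ i, {ω | X i ω ≤ t i} := by
      ext ω; simp [Set.mem_iInter]
    rw [this]
    exact MeasurableSet.iInter fun i => measurableSet_le (hX i) measurable_const
  have hset : ∀ u : ℝ, 0 < u → u < 1 →
      {ω | (⨆ j, blockMax B σ η X j ω ^ l j) ≤ u}
        = {ω | ∀ i, X i ω ≤ (σ i * l (B i) / (-Real.log u)) ^ η} := by
    intro u hu h1
    have hlogu : 0 < -Real.log u := by have := Real.log_neg hu h1; linarith
    ext ω
    simp only [Set.mem_setOf_eq]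
    have hbd : BddAbove (Set.range fun j => blockMax B σ η X j ω ^ l j) :=
      Set.Finite.bddAbove (Set.finite_range _)
    rw [ciSup_le_iff hbd]
    have hstep : ∀ j, (blockMax B σ η X j ω ^ l j ≤ u
        ↔ ∀ i ∈ S j, X i ω ≤ (σ i * l (B i) / (-Real.log u)) ^ η) := by
      intro j
      have hv0 : 0 < u ^ (l j)⁻¹ := Real.rpow_pos_of_pos hu _
      have hv1 : u ^ (l j)⁻¹ < 1 := by
        exact Real.rpow_lt_one hu.le h1 (inv_pos.mpr (hl j))
      have e1 : blockMax B σ η X j ω ^ l j ≤ u ↔ blockMax B σ η X j ω ≤ u ^ (l j)⁻¹ := by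
        conv_lhs => rw [← Real.rpow_inv_rpow hu.le (hl j).ne']
        exact Real.rpow_le_rpow_iff (hBM0 j ω) hv0.le (hl j)
      rw [e1, hBM, Finset.sup'_le_iff]
      apply forall₂_congr
      intro i hi
      have hBi : B i = j := by simpa [hS] using hi
      rw [margF_le_iff (hσ i) hη0 hv0 hv1]
      have hlogv : -Real.log (u ^ (l j)⁻¹) = (l j)⁻¹ * (-Real.log u) := by
        rw [Real.log_rpow hu]; ring
      rw [hlogv, hBi]
      have hlogne : Real.log u ≠ 0 := by
        intro hh; rw [hh] at hlogu; simp at hlogu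
      have : σ i / ((l j)⁻¹ * (-Real.log u)) = σ i * l j / (-Real.log u) := by
        rw [div_eq_div_iff (mul_pos (inv_pos.mpr (hl j)) hlogu).ne' hlogu.ne']
        field_simp
        rw [mul_div_cancel_right₀ _ (hl j).ne']
      rw [this]
    constructor
    · intro h i
      have := (hstep (B i)).mp (h (B i)) i (hmem i)
      exact this
    · intro h j
      exact (hstep j).mpr fun i _ => h i
  -- probability of the lower event
  have hprob : ∀ u : ℝ, 0 < u → u < 1 →
      (ℙ {ω | (⨆ j, blockMax B σ η X j ω ^ l j) ≤ u}).toReal = u ^ θ := by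
    intro u hu h1
    have hlogu : 0 < -Real.log u := by have := Real.log_neg hu h1; linarith
    set t : Fin d → ℝ := fun i => (σ i * l (B i) / (-Real.log u)) ^ η with htdef
    have htpos : ∀ i, 0 < t i := fun i =>
      Real.rpow_pos_of_pos (div_pos (mul_pos (hσ i) (hl (B i))) hlogu) η
    rw [hset u hu h1]
    have hJ : (ℙ {ω | ∀ i, X i ω ≤ t i}).toReal = jointF X t := rfl
    rw [hJ]
    have hc : (0:ℝ) < (-Real.log u) ^ (-η) := Real.rpow_pos_of_pos hlogu _
    have hti : t = fun i => (-Real.log u) ^ (-η) * b i := by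
      funext i
      simp only [htdef, hb]
      rw [Real.div_rpow (mul_pos (hσ i) (hl (B i))).le hlogu.le, Real.rpow_neg hlogu.le,
        Real.mul_rpow (hσ i).le (hl (B i)).le]
      ring
    have hexpo : expo X t = (-Real.log u) * θ := by
      rw [hti, hhom _ hc b hbpos]
      congr 1
      rw [← Real.rpow_mul hlogu.le]
      have h2 : (-η) * (-1 / η) = 1 := by field_simp
      rw [h2, Real.rpow_one]
    have hjp : 0 < jointF X t := hpos t htpos
    have hlogJ : Real.log (jointF X t) = Real.log u * θ := by
      have : Real.log (jointF X t) = -expo X t := by unfold expo; ring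
      rw [this, hexpo]; ring
    rw [← Real.exp_log hjp, hlogJ, Real.rpow_def_of_pos hu]
  -- compute expectation
  have hθ1 : θ + 1 ≠ 0 := by linarith
  have hUint : ∫ ω, (⨆ j, blockMax B σ η X j ω ^ l j) ∂ℙ = θ / (θ + 1) := by
    rw [hint.integral_eq_integral_meas_lt (ae_of_all _ hU0)]
    have hcongr : ∀ u ∈ Set.Ioi (0:ℝ),
        (ℙ {a | u < ⨆ j, blockMax B σ η X j a ^ l j}).toReal
          = Set.indicator (Set.Ioc 0 1) (fun u => 1 - u ^ θ) u := by
      intro u hu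
      simp only [Set.mem_Ioi] at hu
      rcases lt_trichotomy u 1 with h | h | h
      · rw [Set.indicator_of_mem (Set.mem_Ioc.mpr ⟨hu, h.le⟩)]
        have hmeasS : MeasurableSet {ω | (⨆ j, blockMax B σ η X j ω ^ l j) ≤ u} := by
          rw [hset u hu h]; exact hms _
        have hcompl : {a | u < ⨆ j, blockMax B σ η X j a ^ l j}
            = {ω | (⨆ j, blockMax B σ η X j ω ^ l j) ≤ u}ᶜ := by
          ext ω; simp [not_le]
        rw [hcompl, measure_compl hmeasS (measure_ne_top _ _), measure_univ,
          ENNReal.toReal_sub_of_le prob_le_one ENNReal.one_ne_top, ENNReal.toReal_one,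
          hprob u hu h]
      · subst h
        have hempty : {a | (1:ℝ) < ⨆ j, blockMax B σ η X j a ^ l j} = ∅ := by
          ext ω; simp only [Set.mem_setOf_eq, Set.mem_empty_iff_false, iff_false, not_lt]
          exact hU1 ω
        rw [hempty, measure_empty, Set.indicator_of_mem (Set.mem_Ioc.mpr ⟨hu, le_rfl⟩), Real.one_rpow]
        simp
      · rw [Set.indicator_of_notMem (by simp [not_le.mpr h] : (u:ℝ) ∉ Set.Ioc 0 1)]
        have hempty : {a | u < ⨆ j, blockMax B σ η X j a ^ l j} = ∅ := by
          ext ω; simp only [Set.mem_setOf_eq, Set.mem_empty_iff_false, iff_false, not_lt]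
          exact le_trans (hU1 ω) h.le
        rw [hempty, measure_empty]
        simp
    simp only [measureReal_def]
    rw [setIntegral_congr_fun measurableSet_Ioi hcongr, setIntegral_indicator measurableSet_Ioc]
    have hinter : Set.Ioi (0:ℝ) ∩ Set.Ioc 0 1 = Set.Ioc 0 1 :=
      Set.inter_eq_self_of_subset_right (fun x hx => hx.1)
    rw [hinter, ← intervalIntegral.integral_of_le zero_le_one,
      intervalIntegral.integral_sub intervalIntegrable_const
        (intervalIntegral.intervalIntegrable_rpow' (by linarith : (-1:ℝ) < θ)),
      intervalIntegral.integral_const, integral_rpow (Or.inl (by linarith : (-1:ℝ) < θ)),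
      Real.one_rpow, Real.zero_rpow hθ1]
    rw [smul_eq_mul]
    field_simp
    ring
  unfold epsFun
  rw [hUint]
  have h2 : 1 - θ / (θ + 1) = 1 / (θ + 1) := by field_simp; ring
  rw [h2, one_div]
  field_simp
end
end

section
/- Suppose p = 2, so I = I_1 ∪ I_2, and let λ_1, λ_2 > 0. Then both limits below exist and λ_2 ε_{I_2}(1) · lim_{t→∞} P(M(I_1) > 1 − λ_1/t | M(I_2) > 1 − λ_2/t) = λ_1 ε_{I_1}(1) · lim_{t→∞} P(M(I_2) > 1 − λ_2/t | M(I_1) > 1 − λ_1/t) = λ_1 ε_{I_1}(1) + λ_2 ε_{I_2}(1) − ε(λ_1^{-1}, λ_2^{-1}) (the conditional probabilities are well defined for all sufficiently large t). -/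
open MeasureTheory ProbabilityTheory Real Filter Topology
open scoped ProbabilityTheory

noncomputable section

namespace Stmt10

variable {Ω : Type*} [MeasureSpace Ω] [IsProbabilityMeasure (ℙ : Measure Ω)]
  {d : ℕ} {X : Fin d → Ω → ℝ} {σ : Fin d → ℝ} {η : ℝ} {B : Fin d → Fin 2} {j : Fin 2}

lemma margF_nonneg (σi η t : ℝ) : 0 ≤ margF σi η t := by
  unfold margF; split <;> positivity

lemma margF_lt_one {σi : ℝ} (hσi : 0 < σi) (hη : 0 < η) (t : ℝ) : margF σi η t < 1 := by
  unfold margF; split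
  · rename_i ht
    rw [Real.exp_lt_one_iff]
    have h1 : 0 < t ^ (-1/η) := Real.rpow_pos_of_pos ht _
    nlinarith
  · norm_num

lemma margF_le_iff {σi : ℝ} (hσi : 0 < σi) (hη : 0 < η) {u : ℝ} (hu0 : 0 < u) (hu1 : u < 1)
    (x : ℝ) : margF σi η x ≤ u ↔ x ≤ (σi / (-Real.log u)) ^ η := by
  have hc : 0 < -Real.log u := by have := Real.log_neg hu0 hu1; linarith
  have hT : 0 < (σi / (-Real.log u)) ^ η := Real.rpow_pos_of_pos (by positivity) _
  unfold margF
  split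
  · rename_i hx
    rw [show u = Real.exp (Real.log u) from (Real.exp_log hu0).symm, Real.exp_le_exp,
      Real.exp_log hu0]
    have hy : 0 < x ^ (η⁻¹) := Real.rpow_pos_of_pos hx _
    have hcan := mul_inv_cancel₀ hy.ne'
    have hrw : x ^ (-1/η) = (x ^ (η⁻¹))⁻¹ := by
      rw [show (-1/η) = -(η⁻¹) by field_simp, Real.rpow_neg hx.le]
    rw [hrw]
    constructor
    · intro h
      rw [← Real.rpow_inv_le_iff_of_pos hx.le (by positivity) hη, le_div_iff₀ hc]
      have h2 := mul_le_mul_of_nonneg_left h hy.le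
      nlinarith
    · intro h
      rw [← Real.rpow_inv_le_iff_of_pos hx.le (by positivity) hη, le_div_iff₀ hc] at h
      have h2 := mul_le_mul_of_nonneg_right h (inv_nonneg.2 hy.le)
      nlinarith
  · rename_i hx
    push_neg at hx
    constructor
    · intro _; linarith
    · intro _; linarith

lemma blockMax_le_iff (hj : ∃ i, B i = j) {u : ℝ} (ω : Ω) :
    blockMax B σ η X j ω ≤ u ↔ ∀ i, B i = j → margF (σ i) η (X i ω) ≤ u := by
  obtain ⟨i0, hi0⟩ := hj
  unfold blockMax
  rw [csSup_le_iff ((Set.toFinite _).image _).bddAbove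
    (Set.Nonempty.image _ ⟨i0, hi0⟩)]
  constructor
  · intro h i hi; exact h _ ⟨i, hi, rfl⟩
  · rintro h _ ⟨i, hi, rfl⟩; exact h i hi

lemma blockMax_nonneg (hj : ∃ i, B i = j) (ω : Ω) : 0 ≤ blockMax B σ η X j ω := by
  obtain ⟨i0, hi0⟩ := hj
  have hb : BddAbove ((fun i => margF (σ i) η (X i ω)) '' {i | B i = j}) :=
    ((Set.toFinite {i | B i = j}).image _).bddAbove
  exact (margF_nonneg (σ i0) η (X i0 ω)).trans (le_csSup hb ⟨i0, hi0, rfl⟩)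

lemma blockMax_lt_one (hσ : ∀ i, 0 < σ i) (hη : 0 < η) (hj : ∃ i, B i = j) (ω : Ω) :
    blockMax B σ η X j ω < 1 := by
  obtain ⟨i0, hi0⟩ := hj
  have hmem := Set.Nonempty.csSup_mem (Set.Nonempty.image (fun i => margF (σ i) η (X i ω)) ⟨i0, hi0⟩)
    ((Set.toFinite {i | B i = j}).image _)
  obtain ⟨i, _, hEq⟩ := hmem
  rw [blockMax, ← hEq]
  exact margF_lt_one (hσ i) hη _

lemma measurable_margF (σi η : ℝ) : Measurable (margF σi η) := by
  have h1 : ContinuousOn (fun t : ℝ => Real.exp (-σi * t ^ (-1 / η))) (Set.Ioi 0) := by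
    apply Real.continuous_exp.comp_continuousOn
    apply ContinuousOn.mul continuousOn_const
    intro x hx
    exact (Real.continuousAt_rpow_const x _ (Or.inl (ne_of_gt hx))).continuousWithinAt
  have := h1.measurable_piecewise (g := fun _ : ℝ => (0:ℝ))
    continuousOn_const measurableSet_Ioi
  convert this using 1
  funext t; by_cases ht : 0 < t <;> simp [margF, Set.piecewise, ht]

lemma measurable_blockMax (hX : ∀ i, Measurable (X i)) (hj : ∃ i, B i = j) :
    Measurable (blockMax B σ η X j) := by
  classical
  have hne : ({i | B i = j}).toFinset.Nonempty := by
    obtain ⟨i, hi⟩ := hj; exact ⟨i, by simpa using hi⟩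
  have hEq : blockMax B σ η X j =
      fun ω => ({i | B i = j}).toFinset.sup' hne (fun i => margF (σ i) η (X i ω)) := by
    funext ω
    rw [Finset.sup'_eq_csSup_image, Set.coe_toFinset]
    rfl
  rw [hEq]
  have := Finset.measurable_sup' (δ := Ω) (α := ℝ) hne
    (f := fun i ω => margF (σ i) η (X i ω))
    (fun i _ => (measurable_margF (σ i) η).comp (hX i))
  convert this using 1
  funext ω
  simp [Finset.sup'_apply]

lemma measurableSet_le_all (hX : ∀ i, Measurable (X i)) (t : Fin d → ℝ) :
    MeasurableSet {ω | ∀ i, X i ω ≤ t i} := by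
  have : {ω | ∀ i, X i ω ≤ t i} = ⋂ i, X i ⁻¹' Set.Iic (t i) := by
    ext ω; simp [Set.mem_iInter]
  rw [this]
  exact MeasurableSet.iInter fun i => (hX i) measurableSet_Iic

lemma jointF_nonneg (t : Fin d → ℝ) : 0 ≤ jointF X t := ENNReal.toReal_nonneg

lemma jointF_le_one (t : Fin d → ℝ) : jointF X t ≤ 1 :=
  ENNReal.toReal_le_of_le_ofReal zero_le_one
    (le_trans (measure_mono (Set.subset_univ _)) (by simp))

lemma prob_all_eq (hpos : ∀ t : Fin d → ℝ, (∀ i, 0 < t i) → 0 < jointF X t)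
    (t : Fin d → ℝ) (ht : ∀ i, 0 < t i) :
    ℙ {ω | ∀ i, X i ω ≤ t i} = ENNReal.ofReal (Real.exp (-expo X t)) := by
  rw [expo, neg_neg, Real.exp_log (hpos t ht), jointF,
    ENNReal.ofReal_toReal (measure_ne_top _ _)]

lemma expo_nonneg (t : Fin d → ℝ) : 0 ≤ expo X t := by
  have := Real.log_nonpos (jointF_nonneg (X := X) t) (jointF_le_one (X := X) t)
  unfold expo; linarith

lemma expo_anti (hpos : ∀ t : Fin d → ℝ, (∀ i, 0 < t i) → 0 < jointF X t)
    {t t' : Fin d → ℝ} (ht : ∀ i, 0 < t i) (h : ∀ i, t i ≤ t' i) :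
    expo X t' ≤ expo X t := by
  have h1 : jointF X t ≤ jointF X t' := ENNReal.toReal_mono (measure_ne_top _ _)
    (measure_mono (fun ω hω i => (hω i).trans (h i)))
  have h2 := (Real.log_le_log_iff (hpos t ht) (lt_of_lt_of_le (hpos t ht) h1)).2 h1
  unfold expo; linarith

lemma expo_pos (hd : 0 < d) (hσ : ∀ i, 0 < σ i) {η : ℝ}
    (hmarg : ∀ i, ∀ s : ℝ, 0 < s →
      ℙ {ω | X i ω ≤ s} = ENNReal.ofReal (Real.exp (-σ i * s ^ (-1 / η))))
    (hpos : ∀ t : Fin d → ℝ, (∀ i, 0 < t i) → 0 < jointF X t)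
    (t : Fin d → ℝ) (ht : ∀ i, 0 < t i) : 0 < expo X t := by
  set i0 : Fin d := ⟨0, hd⟩
  have h1 : jointF X t ≤ Real.exp (-σ i0 * t i0 ^ (-1/η)) := by
    unfold jointF
    calc (ℙ {ω | ∀ i, X i ω ≤ t i}).toReal
        ≤ (ℙ {ω | X i0 ω ≤ t i0}).toReal :=
          ENNReal.toReal_mono (measure_ne_top _ _) (measure_mono fun ω hω => hω i0)
      _ = Real.exp (-σ i0 * t i0 ^ (-1/η)) := by
          rw [hmarg i0 _ (ht i0), ENNReal.toReal_ofReal (Real.exp_nonneg _)]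
  have hrp : 0 < t i0 ^ (-1/η) := Real.rpow_pos_of_pos (ht i0) _
  have h2 : Real.exp (-σ i0 * t i0 ^ (-1/η)) < 1 :=
    Real.exp_lt_one_iff.2 (by nlinarith [hσ i0])
  have := Real.log_neg (hpos t ht) (lt_of_le_of_lt h1 h2)
  unfold expo; linarith

/-- The function `Λ(w) = ℓ((σᵢ / w_{B i})^η)`. -/
def lam (X : Fin d → Ω → ℝ) (σ : Fin d → ℝ) (η : ℝ) (B : Fin d → Fin 2) (w : Fin 2 → ℝ) : ℝ :=
  expo X (fun i => (σ i / w (B i)) ^ η)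

lemma lam_smul (hσ : ∀ i, 0 < σ i) (hη0 : 0 < η)
    (hhom : ∀ c : ℝ, 0 < c → ∀ t : Fin d → ℝ, (∀ i, 0 < t i) →
      expo X (fun i => c * t i) = c ^ (-1 / η) * expo X t)
    {w : Fin 2 → ℝ} (hw : ∀ j, 0 < w j) {c : ℝ} (hc : 0 < c) :
    lam X σ η B (fun j => c * w j) = c * lam X σ η B w := by
  have hbase : ∀ i, 0 < (σ i / w (B i)) ^ η :=
    fun i => Real.rpow_pos_of_pos (div_pos (hσ i) (hw (B i))) _
  have hkey : (fun i => (σ i / (c * w (B i))) ^ η)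
      = fun i => c ^ (-η) * (σ i / w (B i)) ^ η := by
    funext i
    rw [show σ i / (c * w (B i)) = c⁻¹ * (σ i / w (B i)) by
      field_simp]
    rw [Real.mul_rpow (inv_nonneg.2 hc.le) (div_pos (hσ i) (hw (B i))).le,
      Real.inv_rpow hc.le, ← Real.rpow_neg hc.le]
  have hcpow : 0 < c ^ (-η) := Real.rpow_pos_of_pos hc _
  unfold lam
  rw [hkey, hhom _ hcpow _ hbase]
  congr 1
  rw [← Real.rpow_mul hc.le, show -η * (-1/η) = 1 by field_simp, Real.rpow_one]

lemma lam_mono (hσ : ∀ i, 0 < σ i) (hη0 : 0 < η)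
    (hpos : ∀ t : Fin d → ℝ, (∀ i, 0 < t i) → 0 < jointF X t)
    {w w' : Fin 2 → ℝ} (hw : ∀ j, 0 < w j) (hw' : ∀ j, 0 < w' j) (h : ∀ j, w j ≤ w' j) :
    lam X σ η B w ≤ lam X σ η B w' := by
  unfold lam
  apply expo_anti hpos (fun i => Real.rpow_pos_of_pos (div_pos (hσ i) (hw' (B i))) _)
  intro i
  have h1 : σ i / w' (B i) ≤ σ i / w (B i) :=
    div_le_div_of_nonneg_left (hσ i).le (hw (B i)) (h (B i))
  exact Real.rpow_le_rpow (div_pos (hσ i) (hw' (B i))).le h1 hη0.le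

lemma prob_blocks_le (hσ : ∀ i, 0 < σ i) (hη0 : 0 < η)
    (hpos : ∀ t : Fin d → ℝ, (∀ i, 0 < t i) → 0 < jointF X t)
    (hB : Function.Surjective B) {v : Fin 2 → ℝ} (hv : ∀ j, v j ∈ Set.Ioo (0:ℝ) 1) :
    ℙ {ω | ∀ j, blockMax B σ η X j ω ≤ v j} =
      ENNReal.ofReal (Real.exp (-(lam X σ η B (fun j => -Real.log (v j))))) := by
  have hlog : ∀ j, 0 < -Real.log (v j) := fun j => by
    have := Real.log_neg (hv j).1 (hv j).2; linarith
  have hset : {ω | ∀ j, blockMax B σ η X j ω ≤ v j}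
      = {ω | ∀ i, X i ω ≤ (σ i / (-Real.log (v (B i)))) ^ η} := by
    ext ω
    simp only [Set.mem_setOf_eq]
    constructor
    · intro h i
      exact (margF_le_iff (hσ i) hη0 (hv (B i)).1 (hv (B i)).2 _).1
        ((blockMax_le_iff (hB (B i)) ω).1 (h (B i)) i rfl)
    · intro h j
      rw [blockMax_le_iff (hB j) ω]
      rintro i rfl
      exact (margF_le_iff (hσ i) hη0 (hv (B i)).1 (hv (B i)).2 _).2 (h i)
  rw [hset, prob_all_eq hpos _
    (fun i => Real.rpow_pos_of_pos (div_pos (hσ i) (hlog (B i))) _)]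
  rfl

lemma block_theta (hd : 0 < d) (hX : ∀ i, Measurable (X i)) (hσ : ∀ i, 0 < σ i) (hη0 : 0 < η)
    (hmarg : ∀ i, ∀ s : ℝ, 0 < s →
      ℙ {ω | X i ω ≤ s} = ENNReal.ofReal (Real.exp (-σ i * s ^ (-1 / η))))
    (hpos : ∀ t : Fin d → ℝ, (∀ i, 0 < t i) → 0 < jointF X t)
    (hhom : ∀ c : ℝ, 0 < c → ∀ t : Fin d → ℝ, (∀ i, 0 < t i) →
      expo X (fun i => c * t i) = c ^ (-1 / η) * expo X t)
    (hB : Function.Surjective B) (j : Fin 2) :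
    ∃ θ : ℝ, 0 < θ ∧ ∀ u ∈ Set.Ioo (0:ℝ) 1,
      ℙ {ω | blockMax B σ η X j ω ≤ u} = ENNReal.ofReal (u ^ θ) := by
  classical
  set tf : ℝ → Fin d → ℝ := fun m i => if B i = j then (σ i) ^ η else max m 1 with htf
  have htfpos : ∀ m i, 0 < tf m i := by
    intro m i
    simp only [htf]
    split
    · exact Real.rpow_pos_of_pos (hσ i) _
    · exact lt_of_lt_of_le one_pos (le_max_right _ _)
  set φ : ℝ → ℝ := fun m => expo X (tf m) with hφ
  have hφanti : Antitone φ := by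
    intro m m' hmm
    exact expo_anti hpos (htfpos m) (fun i => by
      simp only [htf]; split
      · exact le_rfl
      · exact max_le_max hmm le_rfl)
  have hφ0 : ∀ m, 0 ≤ φ m := fun m => expo_nonneg _
  set L : ℝ := ⨅ m : ℝ, φ m with hLdef
  have hL : Tendsto φ atTop (𝓝 L) :=
    tendsto_atTop_ciInf hφanti ⟨0, by rintro x ⟨m, rfl⟩; exact hφ0 m⟩
  have hkey : ∀ u ∈ Set.Ioo (0:ℝ) 1,
      ℙ {ω | blockMax B σ η X j ω ≤ u} = ENNReal.ofReal (u ^ L) := by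
    intro u hu
    have hc : 0 < -Real.log u := by have := Real.log_neg hu.1 hu.2; linarith
    set c : ℝ := -Real.log u with hcdef
    have hcη : 0 < c ^ η := Real.rpow_pos_of_pos hc _
    set k : ℝ := c ^ (-η) with hkdef
    have hk : 0 < k := Real.rpow_pos_of_pos hc _
    have hkc : k * c ^ η = 1 := by
      rw [hkdef, ← Real.rpow_add hc]; simp
    set tseq : ℕ → Fin d → ℝ := fun n i => if B i = j then (σ i / c) ^ η else ((n:ℝ)+1)
      with htseq
    have hts : ∀ n i, 0 < tseq n i := by
      intro n i; simp only [htseq]; split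
      · exact Real.rpow_pos_of_pos (div_pos (hσ i) hc) _
      · positivity
    set E : ℕ → Set Ω := fun n => {ω | ∀ i, X i ω ≤ tseq n i} with hE
    have hEmono : Monotone E := by
      intro n m hnm ω hω i
      refine (hω i).trans ?_
      simp only [htseq]; split
      · exact le_rfl
      · have : (n:ℝ) ≤ (m:ℝ) := Nat.cast_le.mpr hnm
        linarith
    have hRHS : {ω | blockMax B σ η X j ω ≤ u}
        = {ω | ∀ i, B i = j → X i ω ≤ (σ i / c) ^ η} := by
      ext ω
      rw [Set.mem_setOf_eq, blockMax_le_iff (hB j) ω]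
      constructor
      · intro h i hi
        exact (margF_le_iff (hσ i) hη0 hu.1 hu.2 _).1 (h i hi)
      · intro h i hi
        exact (margF_le_iff (hσ i) hη0 hu.1 hu.2 _).2 (h i hi)
    have hEU : (⋃ n, E n) = {ω | blockMax B σ η X j ω ≤ u} := by
      rw [hRHS]
      ext ω
      simp only [Set.mem_iUnion, hE, Set.mem_setOf_eq]
      constructor
      · rintro ⟨n, hn⟩ i hi
        have := hn i
        simp only [htseq, if_pos hi] at this
        exact this
      · intro h
        have hdne : (Finset.univ : Finset (Fin d)).Nonempty := by
          exact Finset.univ_nonempty_iff.2 (Fin.pos_iff_nonempty.1 hd)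
        obtain ⟨n, hn⟩ := exists_nat_ge (Finset.univ.sup' hdne (fun i => X i ω))
        refine ⟨n, fun i => ?_⟩
        simp only [htseq]
        split
        · exact h i ‹_›
        · calc X i ω ≤ Finset.univ.sup' hdne (fun i => X i ω) :=
                Finset.le_sup' (fun i => X i ω) (Finset.mem_univ i)
            _ ≤ (n:ℝ) := hn
            _ ≤ (n:ℝ) + 1 := by linarith
    have hlim1 : Tendsto (fun n => ℙ (E n)) atTop (𝓝 (ℙ (⋃ n, E n))) :=
      tendsto_measure_iUnion_atTop hEmono
    have harg2 : Tendsto (fun n : ℕ => ((n:ℝ)+1) * c ^ η) atTop atTop := by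
      apply Tendsto.atTop_mul_const hcη
      exact tendsto_atTop_add_const_right _ _ tendsto_natCast_atTop_atTop
    have hval : ∀ᶠ n : ℕ in atTop, ℙ (E n)
        = ENNReal.ofReal (Real.exp (-(c * φ (((n:ℝ)+1) * c ^ η)))) := by
      filter_upwards [harg2.eventually_ge_atTop 1] with n hn1
      have harg : tseq n = fun i => k * (tf (((n:ℝ)+1) * c ^ η) i) := by
        funext i
        simp only [htseq, htf]
        split
        · rw [Real.div_rpow (hσ i).le hc.le, div_eq_mul_inv, mul_comm, hkdef,
            Real.rpow_neg hc.le]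
        · rw [max_eq_left hn1, ← mul_assoc, mul_comm k, mul_assoc,
            hkc, mul_one]
      have := prob_all_eq hpos (tseq n) (hts n)
      rw [this, harg, hhom k hk _ (htfpos _)]
      congr 3
      rw [hkdef, ← Real.rpow_mul hc.le, show -η * (-1/η) = 1 by field_simp, Real.rpow_one]
    have hcont : Continuous fun x : ℝ => ENNReal.ofReal (Real.exp (-(c * x))) :=
      ENNReal.continuous_ofReal.comp (by fun_prop)
    have hφc : Tendsto (fun n : ℕ => φ (((n:ℝ)+1) * c ^ η)) atTop (𝓝 L) := hL.comp harg2
    have hlim2 : Tendsto (fun n : ℕ =>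
        ENNReal.ofReal (Real.exp (-(c * φ (((n:ℝ)+1) * c ^ η))))) atTop
        (𝓝 (ENNReal.ofReal (Real.exp (-(c * L))))) := (hcont.tendsto L).comp hφc
    have hfinal := tendsto_nhds_unique hlim1 (hlim2.congr' (hval.mono fun n h => h.symm))
    rw [← hEU, hfinal]
    congr 1
    rw [Real.rpow_def_of_pos hu.1]
    congr 1
    rw [hcdef]; ring
  refine ⟨L, ?_, hkey⟩
  -- positivity of L
  obtain ⟨i0, hi0⟩ := hB j
  have hu : Real.exp (-1) ∈ Set.Ioo (0:ℝ) 1 :=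
    ⟨Real.exp_pos _, Real.exp_lt_one_iff.2 (by norm_num)⟩
  have hsub : {ω | blockMax B σ η X j ω ≤ Real.exp (-1)} ⊆ {ω | X i0 ω ≤ (σ i0) ^ η} := by
    intro ω hω
    have h1 := (blockMax_le_iff (hB j) ω).1 hω i0 hi0
    have h2 := (margF_le_iff (hσ i0) hη0 hu.1 hu.2 _).1 h1
    rw [Real.log_exp] at h2
    simpa using h2
  have hP2 : ℙ {ω | X i0 ω ≤ (σ i0) ^ η} = ENNReal.ofReal (Real.exp (-1)) := by
    rw [hmarg i0 _ (Real.rpow_pos_of_pos (hσ i0) _)]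
    congr 2
    rw [← Real.rpow_mul (hσ i0).le, show η * (-1/η) = -1 by field_simp, Real.rpow_neg_one,
      neg_mul, mul_inv_cancel₀ (hσ i0).ne']
  have hle : ENNReal.ofReal (Real.exp (-1) ^ L) ≤ ENNReal.ofReal (Real.exp (-1)) := by
    rw [← hkey _ hu, ← hP2]
    exact measure_mono hsub
  have hle2 : Real.exp (-1) ^ L ≤ Real.exp (-1) :=
    (ENNReal.ofReal_le_ofReal_iff (Real.exp_nonneg _)).1 hle
  rw [Real.rpow_def_of_pos (Real.exp_pos _), Real.log_exp] at hle2
  have := Real.exp_le_exp.1 hle2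
  linarith

lemma sub_ofReal_toReal {x : ℝ} (h0 : 0 ≤ x) (h1 : x ≤ 1) :
    ((1:ENNReal) - ENNReal.ofReal x).toReal = 1 - x := by
  rw [ENNReal.toReal_sub_of_le (by simpa using ENNReal.ofReal_le_one.2 h1) ENNReal.one_ne_top,
    ENNReal.toReal_ofReal h0, ENNReal.toReal_one]

lemma integral_of_power_df {Y : Ω → ℝ} (hm : Measurable Y) (h0 : ∀ ω, 0 ≤ Y ω)
    (h1 : ∀ ω, Y ω ≤ 1) {θ : ℝ} (hθ : 0 < θ)
    (hdf : ∀ u ∈ Set.Ioo (0:ℝ) 1, ℙ {ω | Y ω ≤ u} = ENNReal.ofReal (u ^ θ)) :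
    ∫ ω, Y ω = θ / (θ + 1) := by
  have hint : Integrable Y ℙ := by
    apply Integrable.mono' (integrable_const (1:ℝ)) hm.aestronglyMeasurable
    exact ae_of_all _ fun ω => by
      rw [Real.norm_eq_abs, abs_of_nonneg (h0 ω)]; exact h1 ω
  rw [hint.integral_eq_integral_meas_lt (ae_of_all _ h0)]
  have hg1 : ∀ t ∈ Set.Ioc (0:ℝ) 1, (ℙ {a | t < Y a}).toReal = 1 - t ^ θ := by
    intro t ht
    rcases eq_or_lt_of_le ht.2 with h|h
    · subst h
      have : {a | (1:ℝ) < Y a} = ∅ := by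
        ext a; simp only [Set.mem_setOf_eq, Set.mem_empty_iff_false, iff_false, not_lt]
        exact h1 a
      rw [this]
      simp [Real.one_rpow]
    · have hcompl : {a | t < Y a} = {a | Y a ≤ t}ᶜ := by
        ext a; simp [not_le]
      rw [hcompl, measure_compl (s := {a | Y a ≤ t}) (hm measurableSet_Iic) (measure_ne_top _ _), measure_univ,
        hdf t ⟨ht.1, h⟩, sub_ofReal_toReal (Real.rpow_nonneg (le_of_lt ht.1) _)
          (Real.rpow_le_one (le_of_lt ht.1) h.le hθ.le)]
  have hg2 : ∀ t ∈ Set.Ioi (1:ℝ), (ℙ {a | t < Y a}).toReal = 0 := by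
    intro t ht
    have : {a | t < Y a} = ∅ := by
      ext a; simp only [Set.mem_setOf_eq, Set.mem_empty_iff_false, iff_false, not_lt]
      exact (h1 a).trans (le_of_lt ht)
    rw [this]; simp
  have hIoi : Set.Ioi (0:ℝ) = Set.Ioc 0 1 ∪ Set.Ioi 1 := (Set.Ioc_union_Ioi_eq_Ioi zero_le_one).symm
  have hcont : ContinuousOn (fun t : ℝ => 1 - t ^ θ) (Set.Icc 0 1) := by
    apply continuousOn_const.sub
    intro x _
    exact (Real.continuousAt_rpow_const x θ (Or.inr hθ.le)).continuousWithinAt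
  have hint1 : IntegrableOn (fun t => (ℙ {a | t < Y a}).toReal) (Set.Ioc 0 1) := by
    rw [integrableOn_congr_fun hg1 measurableSet_Ioc]
    exact (hcont.integrableOn_Icc).mono_set Set.Ioc_subset_Icc_self
  have hint2 : IntegrableOn (fun t => (ℙ {a | t < Y a}).toReal) (Set.Ioi 1) := by
    rw [integrableOn_congr_fun hg2 measurableSet_Ioi]
    exact integrableOn_zero
  simp only [measureReal_def]
  rw [hIoi, setIntegral_union (Set.Ioc_disjoint_Ioi le_rfl) measurableSet_Ioi hint1 hint2,
    setIntegral_congr_fun measurableSet_Ioc hg1, setIntegral_congr_fun measurableSet_Ioi hg2]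
  simp only [integral_zero, add_zero]
  rw [← intervalIntegral.integral_of_le zero_le_one]
  rw [intervalIntegral.integral_sub intervalIntegrable_const
    (intervalIntegral.intervalIntegrable_rpow (r := θ) (Or.inl hθ.le))]
  rw [integral_rpow (r := θ) (Or.inl (by linarith))]
  simp only [intervalIntegral.integral_const, smul_eq_mul, mul_one, sub_zero,
    Real.one_rpow, Real.zero_rpow (by positivity : θ + 1 ≠ 0)]
  field_simp; ring

lemma eps_ratio {θ : ℝ} (hθ : 0 < θ) : (θ/(θ+1)) / (1 - θ/(θ+1)) = θ := by
  have h1 : 1 - θ/(θ+1) = 1/(θ+1) := by field_simp; ring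
  rw [h1]
  field_simp

lemma iSup_fin_two (f : Fin 2 → ℝ) : (⨆ j, f j) = max (f 0) (f 1) := by
  apply le_antisymm
  · refine ciSup_le fun j => ?_
    fin_cases j
    exacts [le_max_left _ _, le_max_right _ _]
  · exact max_le (le_ciSup (Set.finite_range f).bddAbove 0)
      (le_ciSup (Set.finite_range f).bddAbove 1)

lemma tendsto_aux1 {l θ : ℝ} (hl : 0 < l) :
    Tendsto (fun t : ℝ => t * (1 - (1 - l / t) ^ θ)) atTop (𝓝 (l * θ)) := by
  have h1 : HasDerivAt (fun x : ℝ => 1 - l * x) (-l) 0 := by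
    simpa using ((hasDerivAt_id (0:ℝ)).const_mul l).const_sub 1
  have h2 : HasDerivAt (fun x : ℝ => (1 - l * x) ^ θ) (-(l * θ)) 0 := by
    have := h1.rpow_const (p := θ) (Or.inl (by norm_num))
    convert this using 1
    simp [Real.one_rpow]
    all_goals ring
  have h3 : HasDerivAt (fun x : ℝ => 1 - (1 - l * x) ^ θ) (l * θ) 0 := by
    simpa using h2.const_sub 1
  have hs := hasDerivAt_iff_tendsto_slope.mp h3
  have hinv : Tendsto (fun t : ℝ => t⁻¹) atTop (𝓝[≠] (0:ℝ)) :=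
    tendsto_inv_atTop_nhdsGT_zero.mono_right (nhdsWithin_mono _ (fun x hx => ne_of_gt hx))
  have hcomp := hs.comp hinv
  apply hcomp.congr'
  filter_upwards [eventually_gt_atTop (0:ℝ)] with t ht
  have ht' : t ≠ 0 := ne_of_gt ht
  show slope (fun x : ℝ => 1 - (1 - l * x) ^ θ) 0 t⁻¹ = t * (1 - (1 - l / t) ^ θ)
  rw [slope_def_field]
  norm_num [Real.one_rpow]
  rw [mul_comm, div_eq_mul_inv l t]

lemma tendsto_aux2 {A : ℝ} {a : ℝ → ℝ} (h : Tendsto (fun t => t * a t) atTop (𝓝 A))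
    (ha : ∀ᶠ t : ℝ in atTop, 0 < a t) :
    Tendsto (fun t => t * (1 - Real.exp (-a t))) atTop (𝓝 A) := by
  have ha0 : Tendsto a atTop (𝓝 (0:ℝ)) := by
    have h2 := h.mul tendsto_inv_atTop_zero
    rw [mul_zero] at h2
    apply h2.congr'
    filter_upwards [eventually_gt_atTop (0:ℝ)] with t ht
    have ht' : t ≠ 0 := ne_of_gt ht
    field_simp
  have hψ : HasDerivAt (fun y : ℝ => 1 - Real.exp (-y)) 1 0 := by
    have h1 : HasDerivAt (fun y : ℝ => Real.exp (-y)) (-1) 0 := by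
      simpa using (hasDerivAt_neg (0:ℝ)).exp
    simpa using h1.const_sub 1
  have hs := hasDerivAt_iff_tendsto_slope.mp hψ
  have hwithin : Tendsto a atTop (𝓝[≠] (0:ℝ)) := by
    rw [tendsto_nhdsWithin_iff]
    exact ⟨ha0, ha.mono fun t ht => ne_of_gt ht⟩
  have hcomp := hs.comp hwithin
  have h3 := h.mul hcomp
  rw [mul_one] at h3
  apply h3.congr'
  filter_upwards [ha] with t ht
  have ht' : a t ≠ 0 := ne_of_gt ht
  show t * a t * slope (fun y : ℝ => 1 - Real.exp (-y)) 0 (a t) = t * (1 - Real.exp (-a t))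
  rw [slope_def_field, neg_zero, Real.exp_zero]
  field_simp
  ring

lemma measurable_rpow_const (c : ℝ) : Measurable (fun x : ℝ => x ^ c) :=
  measurable_of_continuousOn_compl_singleton (0:ℝ)
    (fun x hx => (Real.continuousAt_rpow_const x c (Or.inl hx)).continuousWithinAt)

lemma tendsto_t_lam (hd : 0 < d) (hσ : ∀ i, 0 < σ i) (hη0 : 0 < η)
    (hmarg : ∀ i, ∀ s : ℝ, 0 < s →
      ℙ {ω | X i ω ≤ s} = ENNReal.ofReal (Real.exp (-σ i * s ^ (-1 / η))))
    (hpos : ∀ t : Fin d → ℝ, (∀ i, 0 < t i) → 0 < jointF X t)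
    (hhom : ∀ c : ℝ, 0 < c → ∀ t : Fin d → ℝ, (∀ i, 0 < t i) →
      expo X (fun i => c * t i) = c ^ (-1 / η) * expo X t)
    {lv : Fin 2 → ℝ} (hlv : ∀ j, 0 < lv j) :
    Tendsto (fun t : ℝ => t * lam X σ η B (fun j => -Real.log (1 - lv j / t))) atTop
      (𝓝 (lam X σ η B lv)) := by
  set θs : ℝ := lam X σ η B lv with hθsdef
  have hθs : 0 < θs := by
    rw [hθsdef]
    unfold lam
    exact expo_pos hd hσ hmarg hpos _
      (fun i => Real.rpow_pos_of_pos (div_pos (hσ i) (hlv (B i))) _)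
  set M : ℝ := max (lv 0) (lv 1) with hM
  have hMpos : 0 < M := lt_of_lt_of_le (hlv 0) (le_max_left _ _)
  have hlvM : ∀ j, lv j ≤ M := by
    intro j; fin_cases j; exacts [le_max_left _ _, le_max_right _ _]
  -- basic eventual facts
  have hbasic : ∀ᶠ t : ℝ in atTop, (0 < t ∧ ∀ j, 0 < lv j / t ∧ lv j / t < 1) := by
    filter_upwards [eventually_gt_atTop M, eventually_gt_atTop 0] with t htM ht0
    refine ⟨ht0, fun j => ⟨div_pos (hlv j) ht0, ?_⟩⟩
    rw [div_lt_one ht0]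
    exact lt_of_le_of_lt (hlvM j) htM
  have hwpos : ∀ t : ℝ, (∀ j, 0 < lv j / t ∧ lv j / t < 1) →
      ∀ j, 0 < -Real.log (1 - lv j / t) := by
    intro t ht j
    have := Real.log_neg (by linarith [(ht j).2] : (0:ℝ) < 1 - lv j / t)
      (by linarith [(ht j).1] : 1 - lv j / t < 1)
    linarith
  have hwlow : ∀ t : ℝ, (∀ j, 0 < lv j / t ∧ lv j / t < 1) →
      ∀ j, lv j / t ≤ -Real.log (1 - lv j / t) := by
    intro t ht j
    have h1 : (0:ℝ) < 1 - lv j / t := by linarith [(ht j).2]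
    have := Real.log_le_sub_one_of_pos h1
    linarith
  have hlow : ∀ᶠ t : ℝ in atTop, θs ≤ t * lam X σ η B (fun j => -Real.log (1 - lv j / t)) := by
    filter_upwards [hbasic] with t ht
    obtain ⟨ht0, htq⟩ := ht
    have h1 : lam X σ η B (fun j => t⁻¹ * lv j)
        ≤ lam X σ η B (fun j => -Real.log (1 - lv j / t)) := by
      apply lam_mono hσ hη0 hpos (fun j => mul_pos (inv_pos.2 ht0) (hlv j)) (hwpos t htq)
      intro j
      rw [inv_mul_eq_div]
      exact hwlow t htq j
    rw [lam_smul hσ hη0 hhom hlv (inv_pos.2 ht0)] at h1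
    have h2 := mul_le_mul_of_nonneg_left h1 ht0.le
    rw [← mul_assoc, mul_inv_cancel₀ (ne_of_gt ht0), one_mul] at h2
    exact h2
  rw [tendsto_order]
  constructor
  · intro x hx
    filter_upwards [hlow] with t ht
    exact lt_of_lt_of_le hx ht
  · intro x hx
    set ε : ℝ := (x - θs) / (2 * θs) with hε
    have hεpos : 0 < ε := div_pos (by linarith) (by linarith)
    have hεθ : ε * θs = (x - θs) / 2 := by
      rw [hε]; field_simp
    have hval : (1 + ε) * θs < x := by nlinarith
    filter_upwards [hbasic, eventually_ge_atTop (M * (1 + ε) / ε)] with t ht htε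
    obtain ⟨ht0, htq⟩ := ht
    have hq : ∀ j, lv j / t ≤ ε / (1 + ε) := by
      intro j
      rw [div_le_div_iff₀ ht0 (by positivity)]
      rw [div_le_iff₀ hεpos] at htε
      nlinarith [hlvM j]
    have hcancel : (1 + ε) * (ε / (1 + ε)) = ε := by field_simp
    have hupper : ∀ j, -Real.log (1 - lv j / t) ≤ (1 + ε) / t * lv j := by
      intro j
      have h1 : (0:ℝ) < 1 - lv j / t := by linarith [(htq j).2]
      have h2 : -Real.log (1 - lv j / t) ≤ (lv j / t) / (1 - lv j / t) := by
        rw [← Real.log_inv]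
        have h3 := Real.log_le_sub_one_of_pos (inv_pos.2 h1)
        have htl : lv j < t := (div_lt_one ht0).1 (htq j).2
        have h9 : t - lv j ≠ 0 := sub_ne_zero_of_ne htl.ne'
        have h4 : (1 - lv j / t)⁻¹ - 1 = (lv j / t) / (1 - lv j / t) := by
          field_simp; ring
        linarith
      have hq0 := (htq j).1
      have h6 : (1:ℝ) ≤ (1 + ε) * (1 - lv j / t) := by nlinarith [hq j]
      have h5 : (lv j / t) / (1 - lv j / t) ≤ (1 + ε) * (lv j / t) := by
        rw [div_le_iff₀ h1]
        nlinarith [mul_le_mul_of_nonneg_left h6 hq0.le]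
      have h7 : (1 + ε) * (lv j / t) = (1 + ε) / t * lv j := by ring
      linarith
    have hle : lam X σ η B (fun j => -Real.log (1 - lv j / t))
        ≤ lam X σ η B (fun j => (1 + ε) / t * lv j) :=
      lam_mono hσ hη0 hpos (hwpos t htq) (fun j => mul_pos (div_pos (by linarith) ht0) (hlv j)) hupper
    rw [lam_smul hσ hη0 hhom hlv (by positivity : (0:ℝ) < (1 + ε) / t)] at hle
    have h8 := mul_le_mul_of_nonneg_left hle ht0.le
    have h9 : t * ((1 + ε) / t * θs) = (1 + ε) * θs := by field_simp
    rw [h9] at h8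
    exact lt_of_le_of_lt h8 hval

end Stmt10

theorem statement10
    {Ω : Type*} [MeasureSpace Ω] [IsProbabilityMeasure (ℙ : Measure Ω)]
    {d : ℕ} (hd : 0 < d)
    (X : Fin d → Ω → ℝ) (hX : ∀ i, Measurable (X i))
    (σ : Fin d → ℝ) (hσ : ∀ i, 0 < σ i)
    (η : ℝ) (hη0 : 0 < η) (hη1 : η ≤ 1)
    (hmarg : ∀ i, ∀ t : ℝ, 0 < t →
      ℙ {ω | X i ω ≤ t} = ENNReal.ofReal (Real.exp (-σ i * t ^ (-1 / η))))
    (hpos : ∀ t : Fin d → ℝ, (∀ i, 0 < t i) → 0 < jointF X t)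
    (hhom : ∀ c : ℝ, 0 < c → ∀ t : Fin d → ℝ, (∀ i, 0 < t i) →
      expo X (fun i => c * t i) = c ^ (-1 / η) * expo X t)
    (B : Fin d → Fin 2) (hB : Function.Surjective B)
    (l1 l2 : ℝ) (hl1 : 0 < l1) (hl2 : 0 < l2) :
    (∀ᶠ t : ℝ in atTop, 0 < ℙ {ω | 1 - l2 / t < blockMax B σ η X 1 ω}) ∧
    (∀ᶠ t : ℝ in atTop, 0 < ℙ {ω | 1 - l1 / t < blockMax B σ η X 0 ω}) ∧
    Tendsto (fun t : ℝ => l2 * epsBlock B σ η X 1 1 *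
        ((ℙ {ω | 1 - l1 / t < blockMax B σ η X 0 ω ∧
            1 - l2 / t < blockMax B σ η X 1 ω}).toReal /
          (ℙ {ω | 1 - l2 / t < blockMax B σ η X 1 ω}).toReal)) atTop
      (𝓝 (l1 * epsBlock B σ η X 0 1 + l2 * epsBlock B σ η X 1 1 -
        epsFun B σ η X ![l1⁻¹, l2⁻¹])) ∧
    Tendsto (fun t : ℝ => l1 * epsBlock B σ η X 0 1 *
        ((ℙ {ω | 1 - l1 / t < blockMax B σ η X 0 ω ∧
            1 - l2 / t < blockMax B σ η X 1 ω}).toReal /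
          (ℙ {ω | 1 - l1 / t < blockMax B σ η X 0 ω}).toReal)) atTop
      (𝓝 (l1 * epsBlock B σ η X 0 1 + l2 * epsBlock B σ η X 1 1 -
        epsFun B σ η X ![l1⁻¹, l2⁻¹])) := by
  classical
  obtain ⟨θ0, hθ0, hdf0⟩ := Stmt10.block_theta hd hX hσ hη0 hmarg hpos hhom hB 0
  obtain ⟨θ1, hθ1, hdf1⟩ := Stmt10.block_theta hd hX hσ hη0 hmarg hpos hhom hB 1
  have hlvpos : ∀ j : Fin 2, 0 < (![l1, l2] : Fin 2 → ℝ) j := by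
    intro j
    fin_cases j
    · simpa using hl1
    · simpa using hl2
  have hθs : 0 < Stmt10.lam X σ η B ![l1, l2] := by
    unfold Stmt10.lam
    exact Stmt10.expo_pos hd hσ hmarg hpos _
      (fun i => Real.rpow_pos_of_pos (div_pos (hσ i) (hlvpos (B i))) _)
  set θs : ℝ := Stmt10.lam X σ η B ![l1, l2] with hθsdef
  have hMmeas : ∀ j, Measurable (blockMax B σ η X j) :=
    fun j => Stmt10.measurable_blockMax hX (hB j)
  have hMnn : ∀ j ω, 0 ≤ blockMax B σ η X j ω := fun j ω => Stmt10.blockMax_nonneg (hB j) ω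
  have hMlt : ∀ j ω, blockMax B σ η X j ω < 1 :=
    fun j ω => Stmt10.blockMax_lt_one hσ hη0 (hB j) ω
  -- epsBlock identities
  have heps0 : epsBlock B σ η X 0 1 = θ0 := by
    unfold epsBlock
    have hi : ∫ ω, blockMax B σ η X 0 ω ^ (1:ℝ) ∂ℙ = θ0 / (θ0 + 1) := by
      have := Stmt10.integral_of_power_df (hMmeas 0) (hMnn 0) (fun ω => (hMlt 0 ω).le) hθ0 hdf0
      simpa [Real.rpow_one] using this
    rw [hi]
    exact Stmt10.eps_ratio hθ0
  have heps1 : epsBlock B σ η X 1 1 = θ1 := by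
    unfold epsBlock
    have hi : ∫ ω, blockMax B σ η X 1 ω ^ (1:ℝ) ∂ℙ = θ1 / (θ1 + 1) := by
      have := Stmt10.integral_of_power_df (hMmeas 1) (hMnn 1) (fun ω => (hMlt 1 ω).le) hθ1 hdf1
      simpa [Real.rpow_one] using this
    rw [hi]
    exact Stmt10.eps_ratio hθ1
  -- epsFun identity
  have hYeq : ∀ ω, (⨆ j, blockMax B σ η X j ω ^ (![l1⁻¹, l2⁻¹] j : ℝ))
      = max (blockMax B σ η X 0 ω ^ (l1⁻¹ : ℝ)) (blockMax B σ η X 1 ω ^ (l2⁻¹ : ℝ)) := by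
    intro ω
    rw [Stmt10.iSup_fin_two]
    simp
  have hYmeas : Measurable (fun ω => ⨆ j, blockMax B σ η X j ω ^ (![l1⁻¹, l2⁻¹] j : ℝ)) := by
    have h0 := (Stmt10.measurable_rpow_const l1⁻¹).comp (hMmeas 0)
    have h1 := (Stmt10.measurable_rpow_const l2⁻¹).comp (hMmeas 1)
    have heq : (fun ω => ⨆ j, blockMax B σ η X j ω ^ (![l1⁻¹, l2⁻¹] j : ℝ))
        = fun ω => max (blockMax B σ η X 0 ω ^ (l1⁻¹ : ℝ)) (blockMax B σ η X 1 ω ^ (l2⁻¹ : ℝ)) :=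
      funext hYeq
    rw [heq]
    exact h0.max h1
  have hYnn : ∀ ω, 0 ≤ ⨆ j, blockMax B σ η X j ω ^ (![l1⁻¹, l2⁻¹] j : ℝ) := fun ω => by
    rw [hYeq ω]
    exact le_max_of_le_left (Real.rpow_nonneg (hMnn 0 ω) _)
  have hYle : ∀ ω, (⨆ j, blockMax B σ η X j ω ^ (![l1⁻¹, l2⁻¹] j : ℝ)) ≤ 1 := fun ω => by
    rw [hYeq ω]
    exact max_le (Real.rpow_le_one (hMnn 0 ω) (hMlt 0 ω).le (by positivity))
      (Real.rpow_le_one (hMnn 1 ω) (hMlt 1 ω).le (by positivity))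
  have hdfY : ∀ u ∈ Set.Ioo (0:ℝ) 1,
      ℙ {ω | (⨆ j, blockMax B σ η X j ω ^ (![l1⁻¹, l2⁻¹] j : ℝ)) ≤ u}
        = ENNReal.ofReal (u ^ θs) := by
    intro u hu
    have hc : 0 < -Real.log u := by have := Real.log_neg hu.1 hu.2; linarith
    have hv : ∀ j : Fin 2, (u ^ ((![l1, l2] : Fin 2 → ℝ) j) : ℝ) ∈ Set.Ioo (0:ℝ) 1 := fun j =>
      ⟨Real.rpow_pos_of_pos hu.1 _, Real.rpow_lt_one hu.1.le hu.2 (hlvpos j)⟩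
    have hset : {ω | (⨆ j, blockMax B σ η X j ω ^ (![l1⁻¹, l2⁻¹] j : ℝ)) ≤ u}
        = {ω | ∀ j, blockMax B σ η X j ω ≤ u ^ ((![l1, l2] : Fin 2 → ℝ) j)} := by
      ext ω
      simp only [Set.mem_setOf_eq]
      rw [hYeq ω, max_le_iff, Fin.forall_fin_two]
      constructor
      · rintro ⟨h0, h1⟩
        exact ⟨(Real.rpow_inv_le_iff_of_pos (hMnn 0 ω) hu.1.le hl1).1 h0,
          (Real.rpow_inv_le_iff_of_pos (hMnn 1 ω) hu.1.le hl2).1 h1⟩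
      · rintro ⟨h0, h1⟩
        exact ⟨(Real.rpow_inv_le_iff_of_pos (hMnn 0 ω) hu.1.le hl1).2 h0,
          (Real.rpow_inv_le_iff_of_pos (hMnn 1 ω) hu.1.le hl2).2 h1⟩
    rw [hset, Stmt10.prob_blocks_le hσ hη0 hpos hB hv]
    have hwfun : (fun j : Fin 2 => -Real.log (u ^ ((![l1, l2] : Fin 2 → ℝ) j)))
        = fun j => (-Real.log u) * (![l1, l2] : Fin 2 → ℝ) j := by
      funext j; rw [Real.log_rpow hu.1]; ring
    rw [hwfun, Stmt10.lam_smul hσ hη0 hhom hlvpos hc]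
    congr 1
    rw [Real.rpow_def_of_pos hu.1]
    congr 1
    rw [hθsdef]
    ring
  have hepsF : epsFun B σ η X ![l1⁻¹, l2⁻¹] = θs := by
    unfold epsFun
    rw [show (∫ ω, ⨆ j, blockMax B σ η X j ω ^ (![l1⁻¹, l2⁻¹] j : ℝ) ∂ℙ) = θs / (θs + 1) from
      Stmt10.integral_of_power_df hYmeas hYnn hYle hθs hdfY]
    exact Stmt10.eps_ratio hθs
  -- eventual facts
  have hbasic : ∀ᶠ t : ℝ in atTop, 0 < t ∧ (1 - l1/t) ∈ Set.Ioo (0:ℝ) 1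
      ∧ (1 - l2/t) ∈ Set.Ioo (0:ℝ) 1 := by
    filter_upwards [eventually_gt_atTop (max l1 l2), eventually_gt_atTop (0:ℝ)] with t h1 h0
    have hx1 : l1 < t := lt_of_le_of_lt (le_max_left _ _) h1
    have hx2 : l2 < t := lt_of_le_of_lt (le_max_right _ _) h1
    have hq1 : 0 < l1 / t := div_pos hl1 h0
    have hq2 : 0 < l2 / t := div_pos hl2 h0
    have hq1' : l1 / t < 1 := (div_lt_one h0).2 hx1
    have hq2' : l2 / t < 1 := (div_lt_one h0).2 hx2
    exact ⟨h0, ⟨by linarith, by linarith⟩, ⟨by linarith, by linarith⟩⟩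
  have hconj1 : ∀ᶠ t : ℝ in atTop, 0 < ℙ {ω | 1 - l2 / t < blockMax B σ η X 1 ω} := by
    filter_upwards [hbasic] with t ht
    obtain ⟨ht0, hu0t, hu1t⟩ := ht
    have hcompl : {ω | 1 - l2 / t < blockMax B σ η X 1 ω}
        = {ω | blockMax B σ η X 1 ω ≤ 1 - l2 / t}ᶜ := by
      ext ω; simp [not_le]
    rw [hcompl, measure_compl (s := {ω | blockMax B σ η X 1 ω ≤ 1 - l2 / t})
      ((hMmeas 1) measurableSet_Iic) (measure_ne_top _ _), measure_univ, hdf1 _ hu1t]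
    rw [tsub_pos_iff_lt]
    exact ENNReal.ofReal_lt_one.2 (Real.rpow_lt_one hu1t.1.le hu1t.2 hθ1)
  have hconj2 : ∀ᶠ t : ℝ in atTop, 0 < ℙ {ω | 1 - l1 / t < blockMax B σ η X 0 ω} := by
    filter_upwards [hbasic] with t ht
    obtain ⟨ht0, hu0t, hu1t⟩ := ht
    have hcompl : {ω | 1 - l1 / t < blockMax B σ η X 0 ω}
        = {ω | blockMax B σ η X 0 ω ≤ 1 - l1 / t}ᶜ := by
      ext ω; simp [not_le]
    rw [hcompl, measure_compl (s := {ω | blockMax B σ η X 0 ω ≤ 1 - l1 / t})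
      ((hMmeas 0) measurableSet_Iic) (measure_ne_top _ _), measure_univ, hdf0 _ hu0t]
    rw [tsub_pos_iff_lt]
    exact ENNReal.ofReal_lt_one.2 (Real.rpow_lt_one hu0t.1.le hu0t.2 hθ0)
  -- toReal identities
  have hDgen : ∀ (j : Fin 2) (θ : ℝ), 0 < θ →
      (∀ u ∈ Set.Ioo (0:ℝ) 1, ℙ {ω | blockMax B σ η X j ω ≤ u} = ENNReal.ofReal (u ^ θ)) →
      ∀ u ∈ Set.Ioo (0:ℝ) 1,
        (ℙ {ω | u < blockMax B σ η X j ω}).toReal = 1 - u ^ θ := by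
    intro j θ hθ hdf u hu
    have hcompl : {ω | u < blockMax B σ η X j ω} = {ω | blockMax B σ η X j ω ≤ u}ᶜ := by
      ext ω; simp [not_le]
    rw [hcompl, measure_compl (s := {ω | blockMax B σ η X j ω ≤ u})
      ((hMmeas j) measurableSet_Iic) (measure_ne_top _ _), measure_univ, hdf u hu,
      Stmt10.sub_ofReal_toReal (Real.rpow_nonneg hu.1.le _)
        (Real.rpow_le_one hu.1.le hu.2.le hθ.le)]
  have hD1ev : ∀ᶠ t : ℝ in atTop,
      (ℙ {ω | 1 - l1 / t < blockMax B σ η X 0 ω}).toReal = 1 - (1 - l1/t) ^ θ0 := by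
    filter_upwards [hbasic] with t ht
    exact hDgen 0 θ0 hθ0 hdf0 _ ht.2.1
  have hD2ev : ∀ᶠ t : ℝ in atTop,
      (ℙ {ω | 1 - l2 / t < blockMax B σ η X 1 ω}).toReal = 1 - (1 - l2/t) ^ θ1 := by
    filter_upwards [hbasic] with t ht
    exact hDgen 1 θ1 hθ1 hdf1 _ ht.2.2
  have hNev : ∀ᶠ t : ℝ in atTop,
      (ℙ {ω | 1 - l1 / t < blockMax B σ η X 0 ω ∧
          1 - l2 / t < blockMax B σ η X 1 ω}).toReal
        = 1 - (1 - l1/t) ^ θ0 - (1 - l2/t) ^ θ1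
          + Real.exp (-(Stmt10.lam X σ η B
              (fun j => -Real.log (1 - (![l1, l2] : Fin 2 → ℝ) j / t)))) := by
    filter_upwards [hbasic] with t ht
    obtain ⟨ht0, hu0t, hu1t⟩ := ht
    set S0 := {ω | blockMax B σ η X 0 ω ≤ 1 - l1 / t} with hS0
    set S1 := {ω | blockMax B σ η X 1 ω ≤ 1 - l2 / t} with hS1
    have hs0 : MeasurableSet S0 := (hMmeas 0) measurableSet_Iic
    have hs1 : MeasurableSet S1 := (hMmeas 1) measurableSet_Iic
    have hev : {ω | 1 - l1 / t < blockMax B σ η X 0 ω ∧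
        1 - l2 / t < blockMax B σ η X 1 ω} = (S0 ∪ S1)ᶜ := by
      ext ω
      simp [hS0, hS1, not_or, not_le]
    have hveq : ∀ j : Fin 2, (1 - (![l1, l2] : Fin 2 → ℝ) j / t) ∈ Set.Ioo (0:ℝ) 1 := by
      intro j
      fin_cases j
      · simpa using hu0t
      · simpa using hu1t
    have hinter : ℙ (S0 ∩ S1) = ENNReal.ofReal (Real.exp (-(Stmt10.lam X σ η B
        (fun j => -Real.log (1 - (![l1, l2] : Fin 2 → ℝ) j / t))))) := by
      have hseteq : S0 ∩ S1
          = {ω | ∀ j, blockMax B σ η X j ω ≤ 1 - (![l1, l2] : Fin 2 → ℝ) j / t} := by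
        ext ω
        simp only [hS0, hS1, Set.mem_inter_iff, Set.mem_setOf_eq, Fin.forall_fin_two]
        exact Iff.rfl
      rw [hseteq, Stmt10.prob_blocks_le hσ hη0 hpos hB
        (v := fun j => 1 - (![l1, l2] : Fin 2 → ℝ) j / t) hveq]
    have huni := measure_union_add_inter (μ := ℙ) S0 hs1
    have hx0 : (ℙ S0).toReal = (1 - l1/t) ^ θ0 := by
      rw [hS0, hdf0 _ hu0t]
      exact ENNReal.toReal_ofReal (Real.rpow_nonneg hu0t.1.le _)
    have hx1 : (ℙ S1).toReal = (1 - l2/t) ^ θ1 := by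
      rw [hS1, hdf1 _ hu1t]
      exact ENNReal.toReal_ofReal (Real.rpow_nonneg hu1t.1.le _)
    have hx2 : (ℙ (S0 ∩ S1)).toReal = Real.exp (-(Stmt10.lam X σ η B
        (fun j => -Real.log (1 - (![l1, l2] : Fin 2 → ℝ) j / t)))) := by
      rw [hinter]
      exact ENNReal.toReal_ofReal (Real.exp_nonneg _)
    have hle1 : ℙ (S0 ∪ S1) ≤ 1 :=
      le_trans (measure_mono (Set.subset_univ _)) (le_of_eq measure_univ)
    have htr : (ℙ (S0 ∪ S1)).toReal + (ℙ (S0 ∩ S1)).toReal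
        = (ℙ S0).toReal + (ℙ S1).toReal := by
      rw [← ENNReal.toReal_add (measure_ne_top _ _) (measure_ne_top _ _),
        ← ENNReal.toReal_add (measure_ne_top _ _) (measure_ne_top _ _), huni]
    rw [hev, measure_compl (hs0.union hs1) (measure_ne_top _ _), measure_univ,
      ENNReal.toReal_sub_of_le hle1 ENNReal.one_ne_top, ENNReal.toReal_one]
    linarith [htr, hx0, hx1, hx2]
  -- the limits
  have hA := Stmt10.tendsto_aux1 (θ := θ0) hl1
  have hB2 := Stmt10.tendsto_aux1 (θ := θ1) hl2
  have hLam := Stmt10.tendsto_t_lam (B := B) hd hσ hη0 hmarg hpos hhom hlvpos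
  have hapos : ∀ᶠ t : ℝ in atTop, 0 < Stmt10.lam X σ η B
      (fun j => -Real.log (1 - (![l1, l2] : Fin 2 → ℝ) j / t)) := by
    filter_upwards [hbasic] with t ht
    obtain ⟨ht0, hu0t, hu1t⟩ := ht
    have hwpos : ∀ j : Fin 2, 0 < -Real.log (1 - (![l1, l2] : Fin 2 → ℝ) j / t) := by
      intro j
      fin_cases j
      · have := Real.log_neg hu0t.1 hu0t.2; simpa using by linarith
      · have := Real.log_neg hu1t.1 hu1t.2; simpa using by linarith
    unfold Stmt10.lam
    exact Stmt10.expo_pos hd hσ hmarg hpos _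
      (fun i => Real.rpow_pos_of_pos (div_pos (hσ i) (hwpos (B i))) _)
  have hC := Stmt10.tendsto_aux2 hLam hapos
  have hNum : Tendsto (fun t : ℝ => t * (ℙ {ω | 1 - l1 / t < blockMax B σ η X 0 ω ∧
      1 - l2 / t < blockMax B σ η X 1 ω}).toReal) atTop
      (𝓝 (l1 * θ0 + l2 * θ1 - θs)) := by
    have h := (hA.add hB2).sub hC
    apply h.congr'
    filter_upwards [hNev] with t hNt
    rw [hNt]
    ring
  refine ⟨hconj1, hconj2, ?_, ?_⟩
  · rw [heps0, heps1, hepsF]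
    have hDen : Tendsto (fun t : ℝ => t * (ℙ {ω | 1 - l2 / t <
        blockMax B σ η X 1 ω}).toReal) atTop (𝓝 (l2 * θ1)) := by
      apply hB2.congr'
      filter_upwards [hD2ev] with t h
      rw [h]
    have hne : l2 * θ1 ≠ 0 := by positivity
    have hQ := hNum.div hDen hne
    have hQ' : Tendsto (fun t : ℝ => (ℙ {ω | 1 - l1 / t < blockMax B σ η X 0 ω ∧
        1 - l2 / t < blockMax B σ η X 1 ω}).toReal /
        (ℙ {ω | 1 - l2 / t < blockMax B σ η X 1 ω}).toReal) atTop
        (𝓝 ((l1 * θ0 + l2 * θ1 - θs) / (l2 * θ1))) := by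
      apply hQ.congr'
      filter_upwards [eventually_gt_atTop (0:ℝ)] with t ht
      exact mul_div_mul_left _ _ (ne_of_gt ht)
    have hfin := hQ'.const_mul (l2 * θ1)
    have hval : l2 * θ1 * ((l1 * θ0 + l2 * θ1 - θs) / (l2 * θ1))
        = l1 * θ0 + l2 * θ1 - θs := by
      field_simp
    rw [hval] at hfin
    exact hfin
  · rw [heps0, heps1, hepsF]
    have hDen : Tendsto (fun t : ℝ => t * (ℙ {ω | 1 - l1 / t <
        blockMax B σ η X 0 ω}).toReal) atTop (𝓝 (l1 * θ0)) := by
      apply hA.congr'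
      filter_upwards [hD1ev] with t h
      rw [h]
    have hne : l1 * θ0 ≠ 0 := by positivity
    have hQ := hNum.div hDen hne
    have hQ' : Tendsto (fun t : ℝ => (ℙ {ω | 1 - l1 / t < blockMax B σ η X 0 ω ∧
        1 - l2 / t < blockMax B σ η X 1 ω}).toReal /
        (ℙ {ω | 1 - l1 / t < blockMax B σ η X 0 ω}).toReal) atTop
        (𝓝 ((l1 * θ0 + l2 * θ1 - θs) / (l1 * θ0))) := by
      apply hQ.congr'
      filter_upwards [eventually_gt_atTop (0:ℝ)] with t ht
      exact mul_div_mul_left _ _ (ne_of_gt ht)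
    have hfin := hQ'.const_mul (l1 * θ0)
    have hval : l1 * θ0 * ((l1 * θ0 + l2 * θ1 - θs) / (l1 * θ0))
        = l1 * θ0 + l2 * θ1 - θs := by
      field_simp
    rw [hval] at hfin
    exact hfin
end
end
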